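/- Let $n \geq 3$ and let $L : (\mathbb{Z}/n\mathbb{Z})^d \to \{C, A, T\}$ be a labeling. The number of pairs $(x,v)$ with $v \in \{-1,0,1\}^d\setminus\{0\}$, $L(x) = A$, $L(x+v) \in \{C,T\}$ equals $3^{d-1} n^d$ if and only if $n$ is even and the set of points labeled $A$ equals $\{(x_1,\ldots,x_d) : x_r \equiv \epsilon \pmod 2\}$ for some $r \in \{1,\ldots,d\}$ and $\epsilon \in \{0,1\}$. -/

import Mathlib

open Finset

inductive Letter | C | A | T
deriving DecidableEq

set_option linter.unusedSectionVars false

namespace S9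

variable {n : ℕ} [NeZero n]

lemma zmod_one_ne_zero (hn : 3 ≤ n) : (1 : ZMod n) ≠ 0 := by
  intro h
  have : (n:ℕ) ∣ 1 := by
    have := (ZMod.natCast_eq_zero_iff 1 n).1 (by simpa using h)
    simpa using this
  have := Nat.le_of_dvd one_pos this
  omega

lemma zmod_neg_one_ne_zero (hn : 3 ≤ n) : (-1 : ZMod n) ≠ 0 := by
  intro h
  exact zmod_one_ne_zero hn (by linear_combination -h)

lemma zmod_one_ne_neg_one (hn : 3 ≤ n) : (1 : ZMod n) ≠ -1 := by
  intro h
  have h2 : ((2:ℕ) : ZMod n) = 0 := by push_cast; linear_combination h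
  have := Nat.le_of_dvd two_pos ((ZMod.natCast_eq_zero_iff 2 n).1 h2)
  omega

lemma zmod_val_neg_one (hn : 3 ≤ n) : (-1 : ZMod n).val = n - 1 := by
  have h : (-1 : ZMod n) = ((n - 1 : ℕ) : ZMod n) := by
    have : ((n:ℕ) : ZMod n) = 0 := ZMod.natCast_self n
    push_cast [Nat.cast_sub (by omega : 1 ≤ n)]
    linear_combination -this
  rw [h, ZMod.val_natCast, Nat.mod_eq_of_lt (by omega)]

end S9

namespace S9
set_option linter.unusedSectionVars false

variable {n d : ℕ} [NeZero n]

def V3 (n : ℕ) : Finset (ZMod n) := {0, 1, -1}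

def Vfull (n d : ℕ) : Finset (Fin d → ZMod n) := Fintype.piFinset fun _ => V3 n

lemma card_V3 (hn : 3 ≤ n) : (V3 n).card = 3 := by
  rw [V3]
  rw [card_insert_of_notMem (by
      simp only [mem_insert, mem_singleton]
      push_neg
      exact ⟨fun h => zmod_one_ne_zero hn h.symm, fun h => zmod_neg_one_ne_zero hn h.symm⟩),
    card_insert_of_notMem (by simp [zmod_one_ne_neg_one hn]), card_singleton]

lemma card_Vfull (hn : 3 ≤ n) : (Vfull n d).card = 3 ^ d := by
  rw [Vfull, Fintype.card_piFinset]
  simp [card_V3 hn]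

lemma card_G : Fintype.card (Fin d → ZMod n) = n ^ d := by
  rw [Fintype.card_fun, ZMod.card, Fintype.card_fin]

def R (u : (Fin d → ZMod n) → ℤ) (v : Fin d → ZMod n) : ℤ := ∑ x, u x * u (x + v)

lemma sum_shift (u : (Fin d → ZMod n) → ℤ) (v : Fin d → ZMod n) :
    ∑ x, u (x + v) = ∑ x, u x := Equiv.sum_comp (Equiv.addRight v) u

lemma R_shift (u : (Fin d → ZMod n) → ℤ) (w w' : Fin d → ZMod n) :
    ∑ x, u (x + w) * u (x + w') = R u (w' - w) := by
  rw [R]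
  refine Fintype.sum_equiv (Equiv.addRight w) _ _ (fun x => ?_)
  have : x + w' = x + w + (w' - w) := by abel
  rw [this]
  rfl

lemma sum_fun_prod {τ : Type*} [Fintype τ] [DecidableEq τ] (φ : Fin d → τ → ℤ) :
    ∑ P : Fin d → τ, ∏ j, φ j (P j) = ∏ j, ∑ t : τ, φ j t := by
  rw [Finset.prod_univ_sum (fun _ => (univ : Finset τ)) φ, Fintype.piFinset_univ]

end S9

namespace S9
variable {n d : ℕ} [NeZero n]

def uL (L : (Fin d → ZMod n) → Letter) : (Fin d → ZMod n) → ℤ :=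
  fun x => if L x = Letter.A then 1 else -1

lemma uL_sq (L : (Fin d → ZMod n) → Letter) (x : Fin d → ZMod n) : uL L x * uL L x = 1 := by
  rw [uL]; split <;> norm_num

lemma uL_pm (L : (Fin d → ZMod n) → Letter) (x : Fin d → ZMod n) :
    uL L x = 1 ∨ uL L x = -1 := by
  rw [uL]; split <;> simp

lemma R_zero (L : (Fin d → ZMod n) → Letter) : R (uL L) 0 = (n:ℤ) ^ d := by
  rw [R]
  simp only [add_zero, uL_sq]
  rw [Finset.sum_const, card_univ, card_G]
  simp

lemma Vfull_eq : Vfull n d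
    = univ.filter (fun v : Fin d → ZMod n => ∀ j, v j = 0 ∨ v j = 1 ∨ v j = -1) := by
  ext v
  simp [Vfull, Fintype.mem_piFinset, V3]

lemma count_identity (hn : 3 ≤ n) (L : (Fin d → ZMod n) → Letter) :
    4 * ((univ.filter
        (fun p : (Fin d → ZMod n) × (Fin d → ZMod n) =>
          (∀ j, p.2 j = 0 ∨ p.2 j = 1 ∨ p.2 j = -1) ∧ p.2 ≠ 0 ∧
          L p.1 = Letter.A ∧
          (L (p.1 + p.2) = Letter.C ∨ L (p.1 + p.2) = Letter.T))).card : ℤ)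
    = 3 ^ d * n ^ d - ∑ v ∈ Vfull n d, R (uL L) v := by
  set u := uL L with hu
  rw [Finset.card_filter]
  push_cast
  rw [Fintype.sum_prod_type]
  have step1 : ∀ x : Fin d → ZMod n,
      (∑ v : Fin d → ZMod n, if ((∀ j, v j = 0 ∨ v j = 1 ∨ v j = -1) ∧ v ≠ 0 ∧
          L x = Letter.A ∧ (L (x + v) = Letter.C ∨ L (x + v) = Letter.T)) then (1:ℤ) else 0)
      = ∑ v ∈ Vfull n d, (if (v ≠ 0 ∧ L x = Letter.A ∧
          (L (x + v) = Letter.C ∨ L (x + v) = Letter.T)) then (1:ℤ) else 0) := by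
    intro x
    rw [Vfull_eq, Finset.sum_filter]
    exact Finset.sum_congr rfl (fun v _ => (ite_and _ _ _ _))
  simp only [step1]
  have step2 : ∀ x : Fin d → ZMod n, ∀ v ∈ Vfull n d,
      (4:ℤ) * (if (v ≠ 0 ∧ L x = Letter.A ∧
          (L (x + v) = Letter.C ∨ L (x + v) = Letter.T)) then (1:ℤ) else 0)
      = (1 + u x) * (1 - u (x + v)) := by
    intro x v _
    rcases eq_or_ne v 0 with rfl | hv
    · simp only [add_zero, ne_eq, not_true_eq_false, false_and, if_false, mul_zero]
      rw [hu, uL]; split <;> norm_num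
    · simp only [hv, ne_eq, not_false_iff, true_and]
      rw [hu, uL, uL]
      cases hA : L x <;> cases hB : L (x + v) <;> simp_all <;> norm_num
  calc (4:ℤ) * ∑ x : Fin d → ZMod n, ∑ v ∈ Vfull n d, (if (v ≠ 0 ∧ L x = Letter.A ∧
          (L (x + v) = Letter.C ∨ L (x + v) = Letter.T)) then (1:ℤ) else 0)
      = ∑ x : Fin d → ZMod n, ∑ v ∈ Vfull n d, (1 + u x) * (1 - u (x + v)) := by
        rw [Finset.mul_sum]
        exact Finset.sum_congr rfl fun x _ => by
          rw [Finset.mul_sum]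
          exact Finset.sum_congr rfl fun v hv => step2 x v hv
    _ = ∑ v ∈ Vfull n d, ∑ x : Fin d → ZMod n, (1 + u x) * (1 - u (x + v)) :=
        Finset.sum_comm
    _ = ∑ v ∈ Vfull n d, ((n:ℤ)^d - R u v) := by
        refine Finset.sum_congr rfl fun v _ => ?_
        have expand : ∀ x, (1 + u x) * (1 - u (x + v))
            = 1 + u x - u (x + v) - u x * u (x + v) := fun x => by ring
        simp only [expand]
        rw [Finset.sum_sub_distrib, Finset.sum_sub_distrib, Finset.sum_add_distrib]
        rw [sum_shift u v]
        have : ∑ _x : Fin d → ZMod n, (1:ℤ) = (n:ℤ)^d := by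
          rw [Finset.sum_const, card_univ, card_G]; simp
        rw [this, R]
        ring
    _ = 3 ^ d * n ^ d - ∑ v ∈ Vfull n d, R u v := by
        rw [Finset.sum_sub_distrib, Finset.sum_const, card_Vfull hn]
        simp [mul_comm]

end S9

namespace S9
variable {n d : ℕ} [NeZero n]

def iota (b : Fin d → Bool) : Fin d → ZMod n := fun j => if b j then 1 else 0

def eps (T W : Fin d → Bool) : ℤ := ∏ j, if W j && !T j then (-1:ℤ) else 1

def cc (d : ℕ) (T : Fin d → Bool) : ℤ := 3^(d-1) + ∏ j, (if T j then (3:ℤ) else -1)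

def gT (u : (Fin d → ZMod n) → ℤ) (T : Fin d → Bool) (x : Fin d → ZMod n) : ℤ :=
  ∑ W : Fin d → Bool, eps T W * u (x + iota W)

lemma gT_sq (u : (Fin d → ZMod n) → ℤ) (T : Fin d → Bool) :
    ∑ x, (gT u T x)^2
    = ∑ W : Fin d → Bool, ∑ W' : Fin d → Bool,
        eps T W * eps T W' * R u (iota W' - iota W) := by
  have h1 : ∀ x, (gT u T x)^2 = ∑ W : Fin d → Bool, ∑ W' : Fin d → Bool,
      (eps T W * u (x + iota W)) * (eps T W' * u (x + iota W')) := fun x => by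
    rw [gT, sq, Finset.sum_mul_sum]
  simp only [h1]
  rw [Finset.sum_comm]
  refine Finset.sum_congr rfl fun W _ => ?_
  rw [Finset.sum_comm]
  refine Finset.sum_congr rfl fun W' _ => ?_
  have h2 : ∀ x, (eps T W * u (x + iota W)) * (eps T W' * u (x + iota W'))
      = eps T W * eps T W' * (u (x + iota W) * u (x + iota W')) := fun x => by ring
  simp only [h2]
  rw [← Finset.mul_sum, R_shift]

lemma kappa (W W' : Fin d → Bool) :
    ∑ T : Fin d → Bool, cc d T * (eps T W * eps T W')
    = 3^(d-1) * ∏ j, (if W j = W' j then (2:ℤ) else 0)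
      + ∏ j, (if W j = W' j then (2:ℤ) else 4) := by
  simp only [cc, add_mul, Finset.sum_add_distrib]
  congr 1
  · rw [← Finset.mul_sum]
    congr 1
    have h1 : ∀ T, eps T W * eps T W' = ∏ j,
        ((if W j && !T j then (-1:ℤ) else 1) * (if W' j && !T j then (-1:ℤ) else 1)) :=
      fun T => by rw [eps, eps, ← Finset.prod_mul_distrib]
    simp only [h1]
    rw [sum_fun_prod (fun j t =>
      (if W j && !t then (-1:ℤ) else 1) * (if W' j && !t then (-1:ℤ) else 1))]
    refine Finset.prod_congr rfl fun j _ => ?_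
    rw [Fintype.sum_bool]
    cases hWj : W j <;> cases hW'j : W' j <;> norm_num
  · have h1 : ∀ T : Fin d → Bool, (∏ j, (if T j then (3:ℤ) else -1)) * (eps T W * eps T W')
        = ∏ j, ((if T j then (3:ℤ) else -1) *
            ((if W j && !T j then (-1:ℤ) else 1) * (if W' j && !T j then (-1:ℤ) else 1))) :=
      fun T => by rw [eps, eps, ← Finset.prod_mul_distrib, ← Finset.prod_mul_distrib]
    simp only [h1]
    rw [sum_fun_prod (fun j t => (if t then (3:ℤ) else -1) *
      ((if W j && !t then (-1:ℤ) else 1) * (if W' j && !t then (-1:ℤ) else 1)))]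
    refine Finset.prod_congr rfl fun j _ => ?_
    rw [Fintype.sum_bool]
    cases hWj : W j <;> cases hW'j : W' j <;> norm_num

lemma sum_beta (u : (Fin d → ZMod n) → ℤ) :
    ∑ W : Fin d → Bool, ∑ W' : Fin d → Bool,
      (∏ j, if W j = W' j then (2:ℤ) else 0) * R u (iota W' - iota W)
    = 4^d * R u 0 := by
  have hprod : ∀ W W' : Fin d → Bool, (∏ j, if W j = W' j then (2:ℤ) else 0)
      = if W' = W then 2^d else 0 := by
    intro W W'
    by_cases h : W' = W
    · subst h; simp
    · rw [if_neg h]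
      obtain ⟨j, hj⟩ : ∃ j, W j ≠ W' j := by
        by_contra hc
        push_neg at hc
        exact h (funext fun j => (hc j).symm)
      exact Finset.prod_eq_zero (mem_univ j) (if_neg hj)
  simp only [hprod]
  have hinner : ∀ W : Fin d → Bool,
      ∑ W' : Fin d → Bool, (if W' = W then (2:ℤ)^d else 0) * R u (iota W' - iota W)
      = 2^d * R u 0 := by
    intro W
    rw [Finset.sum_eq_single W (fun W' _ hne => by rw [if_neg hne, zero_mul])
      (fun h => absurd (mem_univ W) h)]
    rw [if_pos rfl, sub_self]
  simp only [hinner]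
  rw [Finset.sum_const, card_univ, Fintype.card_fun, Fintype.card_bool, Fintype.card_fin]
  rw [nsmul_eq_mul]
  push_cast
  rw [← mul_assoc]
  norm_num
  rw [← mul_pow]
  norm_num

end S9

namespace S9
variable {n d : ℕ} [NeZero n]

def dl : Bool × Bool → ZMod n := fun p => (if p.2 then (1:ZMod n) else 0) - (if p.1 then 1 else 0)

lemma dl_mem_V3 (p : Bool × Bool) : dl (n := n) p ∈ V3 n := by
  rcases p with ⟨a, b⟩
  cases a <;> cases b <;> simp [dl, V3]

lemma gamma_cell (hn : 3 ≤ n) {c : ZMod n} (hc : c ∈ V3 n) :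
    ∑ t : Bool × Bool, (if t.1 = t.2 then (2:ℤ) else 4) * (if dl (n := n) t = c then 1 else 0)
    = 4 := by
  rw [Fintype.sum_prod_type]
  simp only [Fintype.sum_bool]
  have h0 : dl (n := n) (false, false) = 0 := by simp [dl]
  have h1 : dl (n := n) (false, true) = 1 := by simp [dl]
  have h2 : dl (n := n) (true, false) = -1 := by simp [dl]
  have h3 : dl (n := n) (true, true) = 0 := by simp [dl]
  rw [h0, h1, h2, h3]
  rcases (by simpa [V3] using hc : c = 0 ∨ c = 1 ∨ c = -1) with rfl | rfl | rfl
  · simp only [if_pos rfl, if_neg (zmod_one_ne_zero hn), if_neg (zmod_neg_one_ne_zero hn)]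
    norm_num
  · simp only [if_pos rfl, if_neg (Ne.symm (zmod_one_ne_zero hn)),
      if_neg (Ne.symm (zmod_one_ne_neg_one hn))]
    norm_num
  · simp only [if_pos rfl, if_neg (Ne.symm (zmod_neg_one_ne_zero hn)),
      if_neg (zmod_one_ne_neg_one hn)]
    norm_num

lemma sum_gamma (hn : 3 ≤ n) (u : (Fin d → ZMod n) → ℤ) :
    ∑ W : Fin d → Bool, ∑ W' : Fin d → Bool,
      (∏ j, if W j = W' j then (2:ℤ) else 4) * R u (iota W' - iota W)
    = 4^d * ∑ v ∈ Vfull n d, R u v := by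
  -- convert to sum over P : Fin d → Bool × Bool
  set e := Equiv.arrowProdEquivProdArrow (Fin d) (fun _ => Bool) (fun _ => Bool) with he
  set f : (Fin d → Bool) × (Fin d → Bool) → ℤ := fun p =>
    (∏ j, if p.1 j = p.2 j then (2:ℤ) else 4) * R u (iota p.2 - iota p.1) with hf
  have step1 : ∑ W : Fin d → Bool, ∑ W' : Fin d → Bool,
      (∏ j, if W j = W' j then (2:ℤ) else 4) * R u (iota W' - iota W)
      = ∑ P : Fin d → Bool × Bool,
        (∏ j, if (P j).1 = (P j).2 then (2:ℤ) else 4) * R u (fun j => dl (P j)) := by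
    calc ∑ W : Fin d → Bool, ∑ W' : Fin d → Bool,
        (∏ j, if W j = W' j then (2:ℤ) else 4) * R u (iota W' - iota W)
        = ∑ p : (Fin d → Bool) × (Fin d → Bool), f p := (Fintype.sum_prod_type f).symm
      _ = ∑ P : Fin d → Bool × Bool, f (e P) := (Equiv.sum_comp e f).symm
      _ = ∑ P : Fin d → Bool × Bool,
          (∏ j, if (P j).1 = (P j).2 then (2:ℤ) else 4) * R u (fun j => dl (P j)) :=
        Finset.sum_congr rfl fun P _ => rfl
  rw [step1]
  have hmaps : ∀ P ∈ (univ : Finset (Fin d → Bool × Bool)),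
      (fun j => dl (n := n) (P j)) ∈ Vfull n d := by
    intro P _
    rw [Vfull, Fintype.mem_piFinset]
    exact fun j => dl_mem_V3 _
  rw [← Finset.sum_fiberwise_of_maps_to hmaps]
  rw [Finset.mul_sum]
  refine Finset.sum_congr rfl fun v hv => ?_
  have step2 : ∀ P ∈ univ.filter (fun P : Fin d → Bool × Bool => (fun j => dl (n := n) (P j)) = v),
      (∏ j, if (P j).1 = (P j).2 then (2:ℤ) else 4) * R u (fun j => dl (P j))
      = (∏ j, if (P j).1 = (P j).2 then (2:ℤ) else 4) * R u v := by
    intro P hP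
    rw [(Finset.mem_filter.1 hP).2]
  rw [Finset.sum_congr rfl step2, ← Finset.sum_mul]
  congr 1
  -- fiber weight = 4^d
  rw [Finset.sum_filter]
  have step3 : ∀ P : Fin d → Bool × Bool,
      (if (fun j => dl (n := n) (P j)) = v then (∏ j, if (P j).1 = (P j).2 then (2:ℤ) else 4) else 0)
      = ∏ j, ((if (P j).1 = (P j).2 then (2:ℤ) else 4) * (if dl (P j) = v j then 1 else 0)) := by
    intro P
    by_cases h : (fun j => dl (n := n) (P j)) = v
    · rw [if_pos h]
      refine Finset.prod_congr rfl fun j _ => ?_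
      rw [if_pos (congrFun h j), mul_one]
    · rw [if_neg h]
      obtain ⟨j, hj⟩ : ∃ j, dl (n := n) (P j) ≠ v j := by
        by_contra hc
        push_neg at hc
        exact h (funext hc)
      exact (Finset.prod_eq_zero (mem_univ j) (by rw [if_neg hj, mul_zero])).symm
  rw [Finset.sum_congr rfl fun P _ => step3 P]
  rw [sum_fun_prod (fun j t => (if t.1 = t.2 then (2:ℤ) else 4) * (if dl t = v j then 1 else 0))]
  have hv' : ∀ j, v j ∈ V3 n := by
    rw [Vfull, Fintype.mem_piFinset] at hv
    exact hv
  rw [Finset.prod_congr rfl fun j _ => gamma_cell hn (hv' j)]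
  rw [Finset.prod_const, card_univ, Fintype.card_fin]

end S9

namespace S9
variable {n d : ℕ} [NeZero n]

lemma sos (hn : 3 ≤ n) (u : (Fin d → ZMod n) → ℤ) :
    ∑ T : Fin d → Bool, cc d T * ∑ x, (gT u T x)^2
    = 4^d * ((∑ v ∈ Vfull n d, R u v) + 3^(d-1) * R u 0) := by
  simp only [gT_sq]
  have step1 : ∑ T : Fin d → Bool, cc d T * ∑ W : Fin d → Bool, ∑ W' : Fin d → Bool,
        eps T W * eps T W' * R u (iota W' - iota W)
      = ∑ W : Fin d → Bool, ∑ W' : Fin d → Bool,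
        (∑ T : Fin d → Bool, cc d T * (eps T W * eps T W')) * R u (iota W' - iota W) := by
    simp only [Finset.mul_sum, Finset.sum_mul]
    rw [Finset.sum_comm]
    refine Finset.sum_congr rfl fun W _ => ?_
    rw [Finset.sum_comm]
    refine Finset.sum_congr rfl fun W' _ => Finset.sum_congr rfl fun T _ => by ring
  rw [step1]
  have step2 : ∀ W W' : Fin d → Bool,
      (∑ T : Fin d → Bool, cc d T * (eps T W * eps T W')) * R u (iota W' - iota W)
      = 3^(d-1) * ((∏ j, if W j = W' j then (2:ℤ) else 0) * R u (iota W' - iota W))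
        + (∏ j, if W j = W' j then (2:ℤ) else 4) * R u (iota W' - iota W) := by
    intro W W'
    rw [kappa]
    ring
  simp only [step2]
  simp only [Finset.sum_add_distrib]
  have h1 : ∑ W : Fin d → Bool, ∑ W' : Fin d → Bool,
      (3:ℤ)^(d-1) * ((∏ j, if W j = W' j then (2:ℤ) else 0) * R u (iota W' - iota W))
      = 3^(d-1) * (4^d * R u 0) := by
    simp only [← Finset.mul_sum]
    rw [sum_beta]
  rw [h1, sum_gamma hn]
  ring

end S9

namespace S9
variable {n d : ℕ} [NeZero n]

lemma cc_prod_eq (T : Fin d → Bool) :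
    (∏ j, if T j then (3:ℤ) else -1)
    = (-1)^((univ.filter fun j => T j = false).card)
      * 3^(d - (univ.filter fun j => T j = false).card) := by
  rw [← Finset.prod_filter_mul_prod_filter_not univ (fun j => T j = false)]
  have h1 : ∀ j ∈ univ.filter (fun j => T j = false), (if T j then (3:ℤ) else -1) = -1 := by
    intro j hj
    rw [(Finset.mem_filter.1 hj).2]
    simp
  have h2 : ∀ j ∈ univ.filter (fun j => ¬ T j = false), (if T j then (3:ℤ) else -1) = 3 := by
    intro j hj
    have := (Finset.mem_filter.1 hj).2
    rw [eq_true_of_ne_false this]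
    simp
  rw [Finset.prod_congr rfl h1, Finset.prod_congr rfl h2, Finset.prod_const, Finset.prod_const]
  congr 2
  have := Finset.card_filter_add_card_filter_not (s := (univ : Finset (Fin d)))
    (p := fun j => T j = false)
  rw [Finset.card_univ, Fintype.card_fin] at this
  omega

lemma cc_nonneg (T : Fin d → Bool) : 0 ≤ cc d T := by
  rw [cc, cc_prod_eq]
  set k := (univ.filter fun j => T j = false).card with hk
  rcases Nat.eq_zero_or_pos k with h0 | h1
  · rw [h0]
    positivity
  · have hle : (3:ℤ)^(d-k) ≤ 3^(d-1) := pow_le_pow_right₀ (by norm_num) (by omega)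
    have habs : -((3:ℤ)^(d-k)) ≤ (-1)^k * 3^(d-k) := by
      rcases Nat.even_or_odd k with he | ho
      · rw [he.neg_one_pow]
        have : (0:ℤ) ≤ 3^(d-k) := by positivity
        linarith
      · rw [ho.neg_one_pow]
        linarith
    linarith

lemma cc_pos (T : Fin d → Bool) (hT : (univ.filter fun j => T j = false).card ≠ 1) :
    0 < cc d T := by
  rw [cc, cc_prod_eq]
  set k := (univ.filter fun j => T j = false).card with hk
  rcases Nat.eq_zero_or_pos k with h0 | h1
  · rw [h0]
    positivity
  · have hk2 : 2 ≤ k := by omega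
    have hkd : k ≤ d := by
      rw [hk]
      exact (Finset.card_filter_le _ _).trans (by simp)
    have hlt : (3:ℤ)^(d-k) < 3^(d-1) := by
      apply pow_lt_pow_right₀ (by norm_num)
      omega
    have habs : -((3:ℤ)^(d-k)) ≤ (-1)^k * 3^(d-k) := by
      rcases Nat.even_or_odd k with he | ho
      · rw [he.neg_one_pow]
        have : (0:ℤ) ≤ 3^(d-k) := by positivity
        linarith
      · rw [ho.neg_one_pow]
        linarith
    linarith

lemma conds_of_eq (hn : 3 ≤ n) (u : (Fin d → ZMod n) → ℤ)
    (hQ : (∑ v ∈ Vfull n d, R u v) + 3^(d-1) * R u 0 = 0) :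
    ∀ T : Fin d → Bool, (univ.filter fun j => T j = false).card ≠ 1 →
      ∀ x, gT u T x = 0 := by
  have hz : ∑ T : Fin d → Bool, cc d T * ∑ x, (gT u T x)^2 = 0 := by
    rw [sos hn u, hQ, mul_zero]
  have hnn : ∀ T ∈ (univ : Finset (Fin d → Bool)), 0 ≤ cc d T * ∑ x, (gT u T x)^2 :=
    fun T _ => mul_nonneg (cc_nonneg T) (Finset.sum_nonneg fun x _ => sq_nonneg _)
  have hall := (Finset.sum_eq_zero_iff_of_nonneg hnn).1 hz
  intro T hT x
  have h1 := hall T (mem_univ T)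
  have hpos := cc_pos T hT
  have h2 : ∑ x, (gT u T x)^2 = 0 := by
    rcases mul_eq_zero.1 h1 with h | h
    · exact absurd h hpos.ne'
    · exact h
  have h3 := (Finset.sum_eq_zero_iff_of_nonneg
    (fun x _ => sq_nonneg (gT u T x))).1 h2 x (mem_univ x)
  exact pow_eq_zero_iff (two_ne_zero) |>.1 h3

end S9

namespace S9

variable {d : ℕ}

def chi (S W : Fin d → Bool) : ℤ := ∏ j, if W j && S j then (-1:ℤ) else 1

def sing (r : Fin d) : Fin d → Bool := fun j => decide (j = r)

lemma chi_sing (r : Fin d) (W : Fin d → Bool) :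
    chi (sing r) W = if W r then (-1:ℤ) else 1 := by
  rw [chi]
  refine (Finset.prod_eq_single r (fun j _ hj => ?_) (fun h => absurd (mem_univ r) h)).trans ?_
  · simp [sing, hj]
  · simp [sing]

lemma sing_filter_card (r : Fin d) : (univ.filter fun j => sing r j = true).card = 1 := by
  have : (univ.filter fun j => sing r j = true) = {r} := by
    ext j
    simp [sing]
  rw [this, card_singleton]

lemma eq_sing_of_card_one {S : Fin d → Bool}
    (hS : (univ.filter fun j => S j = true).card = 1) : ∃ r, S = sing r := by
  obtain ⟨r, hr⟩ := Finset.card_eq_one.1 hS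
  have hmem : ∀ j : Fin d, S j = true ↔ j = r := by
    intro j
    constructor
    · intro h
      have h2 : j ∈ univ.filter fun j => S j = true := by simp [h]
      rw [hr] at h2
      simpa using h2
    · rintro rfl
      have h2 : j ∈ univ.filter fun i => S i = true := by
        rw [hr]
        exact Finset.mem_singleton_self j
      simpa using h2
  refine ⟨r, funext fun j => ?_⟩
  cases hSj : S j
  · have hne : ¬ (j = r) := fun hc => by
      rw [(hmem j).2 hc] at hSj
      simp at hSj
    simp [sing, hne]
  · simp [sing, (hmem j).1 hSj]

lemma chi_orthog (W W' : Fin d → Bool) :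
    ∑ S : Fin d → Bool, chi S W * chi S W' = if W = W' then 2^d else 0 := by
  have h1 : ∀ S, chi S W * chi S W' = ∏ j,
      ((if W j && S j then (-1:ℤ) else 1) * (if W' j && S j then (-1:ℤ) else 1)) :=
    fun S => by rw [chi, chi, ← Finset.prod_mul_distrib]
  simp only [h1]
  rw [sum_fun_prod (fun j s => (if W j && s then (-1:ℤ) else 1) * (if W' j && s then (-1:ℤ) else 1))]
  by_cases h : W = W'
  · subst h
    rw [if_pos rfl]
    have : ∀ j ∈ (univ : Finset (Fin d)), (∑ s : Bool,
        (if W j && s then (-1:ℤ) else 1) * (if W j && s then (-1:ℤ) else 1)) = 2 := by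
      intro j _
      rw [Fintype.sum_bool]
      cases W j <;> norm_num
    rw [Finset.prod_congr rfl this, Finset.prod_const, card_univ, Fintype.card_fin]
  · rw [if_neg h]
    obtain ⟨j, hj⟩ : ∃ j, W j ≠ W' j := by
      by_contra hc
      push_neg at hc
      exact h (funext hc)
    refine Finset.prod_eq_zero (mem_univ j) ?_
    rw [Fintype.sum_bool]
    cases hW : W j <;> cases hW' : W' j <;> simp_all <;> norm_num

lemma cube_dictator (F : (Fin d → Bool) → ℤ)
    (hF : ∀ W, F W = 1 ∨ F W = -1)
    (h : ∀ S : Fin d → Bool, (univ.filter fun j => S j = true).card ≠ 1 →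
      ∑ W : Fin d → Bool, chi S W * F W = 0) :
    ∃ r : Fin d, ∀ W, F W = F (fun _ => false) * (if W r then -1 else 1) := by
  set W0 : Fin d → Bool := fun _ => false with hW0
  set a : Fin d → ℤ := fun r => ∑ W : Fin d → Bool, chi (sing r) W * F W with ha
  -- inversion
  have hkey : ∀ W, 2^d * F W = ∑ r, (if W r then (-1:ℤ) else 1) * a r := by
    intro W
    have h1 : ∑ S : Fin d → Bool, chi S W * (∑ W' : Fin d → Bool, chi S W' * F W')
        = 2^d * F W := by
      have expand : ∀ S, chi S W * (∑ W' : Fin d → Bool, chi S W' * F W')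
          = ∑ W' : Fin d → Bool, (chi S W * chi S W') * F W' := by
        intro S
        rw [Finset.mul_sum]
        exact Finset.sum_congr rfl fun W' _ => by ring
      simp only [expand]
      rw [Finset.sum_comm]
      have h2 : ∀ W' : Fin d → Bool, ∑ S : Fin d → Bool, (chi S W * chi S W') * F W'
          = (if W = W' then (2:ℤ)^d else 0) * F W' := by
        intro W'
        rw [← Finset.sum_mul, chi_orthog]
      simp only [h2]
      rw [Finset.sum_eq_single W (fun W' _ hne => by rw [if_neg (fun hh => hne hh.symm), zero_mul])
        (fun hh => absurd (mem_univ W) hh)]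
      rw [if_pos rfl]
    rw [← h1]
    -- kill S with weight ≠ 1
    have himage : (Finset.image sing (univ : Finset (Fin d))) ⊆ univ := Finset.subset_univ _
    rw [← Finset.sum_subset himage (fun S _ hS => ?_)]
    · rw [Finset.sum_image (fun r _ s _ hrs => by
        have := congrFun hrs r
        simp [sing] at this
        exact this)]
      refine Finset.sum_congr rfl fun r _ => ?_
      rw [chi_sing]
    · -- S not in image: weight ≠ 1
      have hw : (univ.filter fun j => S j = true).card ≠ 1 := by
        intro hc
        obtain ⟨r, rfl⟩ := eq_sing_of_card_one hc
        exact hS (Finset.mem_image_of_mem sing (mem_univ r))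
      rw [h S hw, mul_zero]
  have h0 : 2^d * F W0 = ∑ r, a r := by
    rw [hkey W0]
    exact Finset.sum_congr rfl fun r _ => by rw [if_neg (by simp [hW0])]; ring
  have has2 : ∀ r, 2 * a r = 2^d * (F W0 - F (sing r)) := by
    intro r
    have h1 : 2^d * F (sing r) = (∑ s, a s) - 2 * a r := by
      rw [hkey (sing r)]
      have h2 : ∀ s, (if sing r s then (-1:ℤ) else 1) * a s
          = a s - (if s = r then 2 * a s else 0) := by
        intro s
        by_cases hs : s = r
        · subst hs
          rw [if_pos rfl, if_pos (by simp [sing])]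
          ring
        · rw [if_neg hs, if_neg (by simp [sing, hs])]
          ring
      simp only [h2]
      rw [Finset.sum_sub_distrib, Finset.sum_ite_eq' univ r (fun s => 2 * a s)]
      simp
    have := h0
    linarith [h1]
  have haval : ∀ t, a t ≠ 0 → a t = 2^d * F W0 := by
    intro t ht
    have h2 := has2 t
    rcases hF (sing t) with h3 | h3 <;> rcases hF W0 with h4 | h4 <;>
        rw [h3, h4] at h2 <;> rw [h4] <;>
      first
        | (exfalso; apply ht; linarith)
        | linarith
  have hex : ∃ r, a r ≠ 0 := by
    by_contra hc
    push_neg at hc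
    rw [Finset.sum_eq_zero (fun r _ => hc r)] at h0
    have h2d : (0:ℤ) < 2^d := by positivity
    rcases hF W0 with h4 | h4 <;> rw [h4] at h0 <;> nlinarith
  obtain ⟨r, hr⟩ := hex
  have hra : a r = 2^d * F W0 := haval r hr
  -- uniqueness
  have huniq : ∀ s, s ≠ r → a s = 0 := by
    intro s hs
    by_contra hsa
    have hsa2 : a s = 2^d * F W0 := haval s hsa
    set W2 : Fin d → Bool := fun j => decide (j = r) || decide (j = s) with hW2
    have hk := hkey W2
    have hterm : ∀ t, (if W2 t then (-1:ℤ) else 1) * a t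
        = a t - (if t = r then 2 * a t else 0) - (if t = s then 2 * a t else 0) := by
      intro t
      by_cases h1 : t = r
      · subst h1
        rw [if_pos (by simp [hW2]), if_pos rfl, if_neg (fun hc => hs hc.symm)]
        ring
      · by_cases h2 : t = s
        · subst h2
          rw [if_pos (by simp [hW2]), if_neg h1, if_pos rfl]
          ring
        · rw [if_neg (by simp [hW2, h1, h2]), if_neg h1, if_neg h2]
          ring
    rw [Finset.sum_congr rfl (fun t _ => hterm t)] at hk
    rw [Finset.sum_sub_distrib, Finset.sum_sub_distrib, Finset.sum_ite_eq' univ r (fun t => 2 * a t),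
      Finset.sum_ite_eq' univ s (fun t => 2 * a t)] at hk
    simp only [mem_univ, if_pos] at hk
    rw [← h0] at hk
    rw [hra, hsa2] at hk
    have h2d : (0:ℤ) < 2^d := by positivity
    have hFW : F W2 = -3 * F W0 := by
      have : (2:ℤ)^d * F W2 = 2^d * (-3 * F W0) := by linarith
      exact mul_left_cancel₀ (ne_of_gt h2d) this
    rcases hF W2 with h5 | h5 <;> rcases hF W0 with h6 | h6 <;> rw [h5, h6] at hFW <;> norm_num at hFW
  refine ⟨r, fun W => ?_⟩
  have hk := hkey W
  rw [Finset.sum_eq_single r (fun s _ hsr => by rw [huniq s hsr, mul_zero])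
    (fun hh => absurd (mem_univ r) hh)] at hk
  rw [hra] at hk
  have h2d : (0:ℤ) < 2^d := by positivity
  apply mul_left_cancel₀ (ne_of_gt h2d)
  rw [hk]
  ring

end S9

namespace S9
variable {n d : ℕ} [NeZero n]

def unit (i : Fin d) : Fin d → ZMod n := iota (sing i)

lemma iota_false : iota (n := n) (fun _ : Fin d => false) = 0 := by
  funext j
  simp [iota]

lemma iota_bor_of_ne {k r : Fin d} (h : k ≠ r) :
    iota (n := n) (fun j => sing k j || sing r j) = unit k + unit r := by
  funext j
  by_cases h1 : j = k
  · subst h1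
    have h2 : ¬ (j = r) := h
    simp [iota, unit, sing, h2, Pi.add_apply]
  · by_cases h2 : j = r
    · subst h2
      simp [iota, unit, sing, h1, Pi.add_apply]
    · simp [iota, unit, sing, h1, h2, Pi.add_apply]

lemma point_dict (u : (Fin d → ZMod n) → ℤ)
    (hu : ∀ x, u x = 1 ∨ u x = -1)
    (hg : ∀ T : Fin d → Bool, (univ.filter fun j => T j = false).card ≠ 1 →
      ∀ x, gT u T x = 0) (x : Fin d → ZMod n) :
    ∃ r, ∀ W, u (x + iota W) = u x * (if W r then -1 else 1) := by
  obtain ⟨r, hr⟩ := cube_dictator (fun W => u (x + iota W)) (fun W => hu _) (by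
    intro S hS
    have hcard : (univ.filter fun j => (!S j) = false).card ≠ 1 := by
      rwa [Finset.filter_congr (fun j _ => (by simp : ((!S j) = false) ↔ (S j = true)))]
    have hT := hg (fun j => !S j) hcard x
    rw [gT] at hT
    rw [← hT]
    refine Finset.sum_congr rfl fun W _ => ?_
    congr 1
    rw [eps, chi]
    exact Finset.prod_congr rfl fun j _ => by rw [Bool.not_not])
  exact ⟨r, fun W => by have h2 := hr W; rwa [iota_false, add_zero] at h2⟩

lemma dict_transfer (u : (Fin d → ZMod n) → ℤ) (hu : ∀ x, u x = 1 ∨ u x = -1)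
    {x : Fin d → ZMod n} {r r' k : Fin d}
    (h1 : ∀ W, u (x + iota W) = u x * (if W r then -1 else 1))
    (h2 : ∀ W, u ((x + unit k) + iota W) = u (x + unit k) * (if W r' then -1 else 1)) :
    r' = r := by
  by_contra hne
  have hux : u x ≠ 0 := by rcases hu x with h | h <;> rw [h] <;> norm_num
  by_cases hrk : r = k
  · subst hrk
    have ha : u (x + unit r) = - u x := by
      have h := h1 (sing r)
      rw [if_pos (by simp [sing]), mul_neg_one] at h
      exact h
    have hb : u ((x + unit r) + unit r') = - u (x + unit r) := by
      have h := h2 (sing r')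
      rw [if_pos (by simp [sing]), mul_neg_one] at h
      exact h
    have hc : u ((x + unit r) + unit r') = - u x := by
      have h := h1 (fun j => sing r j || sing r' j)
      rw [iota_bor_of_ne (fun hcc => hne hcc.symm), if_pos (by simp [sing]), mul_neg_one,
        ← add_assoc] at h
      exact h
    rw [hb, ha] at hc
    apply hux
    linarith
  · have ha : u (x + unit k) = u x := by
      have h := h1 (sing k)
      rw [if_neg (by simp only [sing, decide_eq_true_eq]; exact hrk), mul_one] at h
      exact h
    have hb : u ((x + unit k) + unit r) = u (x + unit k) := by
      have h := h2 (sing r)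
      rw [if_neg (by simp only [sing, decide_eq_true_eq]; exact hne), mul_one] at h
      exact h
    have hc : u ((x + unit k) + unit r) = - u x := by
      have h := h1 (fun j => sing k j || sing r j)
      rw [iota_bor_of_ne (fun hcc => hrk hcc.symm), if_pos (by simp [sing]), mul_neg_one,
        ← add_assoc] at h
      exact h
    rw [hb, ha] at hc
    apply hux
    linarith

end S9

namespace S9
variable {n d : ℕ} [NeZero n]

lemma reach_all {P : (Fin d → ZMod n) → Prop}
    (hstep : ∀ x i, P x → P (x + unit i))
    {x : Fin d → ZMod n} (h0 : P x) (y : Fin d → ZMod n) : P y := by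
  have hnat : ∀ (m : ℕ) (i : Fin d) (z : Fin d → ZMod n), P z → P (z + m • unit i) := by
    intro m
    induction m with
    | zero => intro i z hz; simpa using hz
    | succ m ih =>
      intro i z hz
      have h1 := hstep (z + m • unit i) i (ih i z hz)
      have h2 : z + m • unit i + unit i = z + (m+1) • unit i := by
        rw [succ_nsmul]
        abel
      rwa [h2] at h1
  have hzmod : ∀ (c : ZMod n) (i : Fin d) (z : Fin d → ZMod n), P z → P (z + c • unit i) := by
    intro c i z hz
    have h1 : c • unit (n := n) i = (c.val : ℕ) • unit i := by
      rw [← Nat.cast_smul_eq_nsmul (ZMod n) c.val (unit i)]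
      congr 1
      exact (ZMod.natCast_val c |>.trans (ZMod.cast_id n c)).symm
    rw [h1]
    exact hnat c.val i z hz
  -- decompose v := y - x as sum of scalar multiples of units
  have hdecomp : ∀ v : Fin d → ZMod n, v = ∑ i, v i • unit (n := n) i := by
    intro v
    calc v = ∑ i, v i • (fun j => if i = j then (1 : ZMod n) else 0) := pi_eq_sum_univ v
      _ = ∑ i, v i • unit (n := n) i := by
        refine Finset.sum_congr rfl fun i _ => ?_
        congr 1
        funext j
        simp only [unit, iota, sing]
        by_cases h : i = j
        · subst h; simp
        · rw [if_neg h]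
          have hji : j ≠ i := fun hc => h hc.symm
          simp [hji]
  have hsum : ∀ s : Finset (Fin d), ∀ v : Fin d → ZMod n, P (x + ∑ i ∈ s, v i • unit i) := by
    intro s
    induction s using Finset.induction_on with
    | empty => intro v; simpa using h0
    | insert a s' hni ih =>
      intro v
      rw [Finset.sum_insert hni]
      have h1 := hzmod (v a) a _ (ih v)
      have h2 : x + ∑ i ∈ s', v i • unit i + v a • unit a
          = x + (v a • unit a + ∑ i ∈ s', v i • unit i) := by abel
      rwa [h2] at h1
  have h3 := hsum univ (y - x)
  rw [← hdecomp (y - x)] at h3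
  simpa using h3

lemma global_structure (u : (Fin d → ZMod n) → ℤ)
    (hu : ∀ x, u x = 1 ∨ u x = -1)
    (hg : ∀ T : Fin d → Bool, (univ.filter fun j => T j = false).card ≠ 1 →
      ∀ x, gT u T x = 0) (hd : 0 < d) :
    ∃ r : Fin d, ∀ x, u (x + unit r) = - u x ∧ ∀ i, i ≠ r → u (x + unit i) = u x := by
  obtain ⟨r0, hr0⟩ := point_dict u hu hg 0
  have hP : ∀ y, ∀ W, u (y + iota W) = u y * (if W r0 then -1 else 1) := by
    refine reach_all (P := fun y => ∀ W, u (y + iota W) = u y * (if W r0 then -1 else 1))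
      ?_ hr0
    intro x i hx
    obtain ⟨r', hr'⟩ := point_dict u hu hg (x + unit i)
    have := dict_transfer u hu hx hr'
    rwa [this] at hr'
  refine ⟨r0, fun x => ⟨?_, fun i hi => ?_⟩⟩
  · have h := hP x (sing r0)
    rw [if_pos (by simp [sing]), mul_neg_one] at h
    exact h
  · have h := hP x (sing i)
    rw [if_neg (by simp only [sing, decide_eq_true_eq]; exact fun hc => hi hc.symm),
      mul_one] at h
    exact h

end S9

namespace S9
variable {n d : ℕ} [NeZero n]

lemma unit_nsmul_n (r : Fin d) : (n : ℕ) • unit (n := n) r = 0 := by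
  funext j
  simp only [Pi.smul_apply, unit, iota, Pi.zero_apply]
  split <;> simp [nsmul_eq_mul, ZMod.natCast_self]

lemma even_of_flip (u : (Fin d → ZMod n) → ℤ) (hu : ∀ x, u x = 1 ∨ u x = -1) (r : Fin d)
    (hflip : ∀ x, u (x + unit r) = - u x) : Even n := by
  have hm : ∀ (m : ℕ), u ((0 : Fin d → ZMod n) + m • unit r) = (-1)^m * u 0 := by
    intro m
    induction m with
    | zero => simp
    | succ m ih =>
      have h1 : (0 : Fin d → ZMod n) + (m+1) • unit r = (0 + m • unit r) + unit r := by
        rw [succ_nsmul]; abel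
      rw [h1, hflip, ih, pow_succ]
      ring
  have h1 := hm n
  simp only [unit_nsmul_n, add_zero, zero_add] at h1
  rcases Nat.even_or_odd n with he | ho
  · exact he
  · exfalso
    rw [ho.neg_one_pow] at h1
    rcases hu 0 with h | h <;> rw [h] at h1 <;> norm_num at h1

lemma neg_one_pow_mod_even (hE : Even n) (m : ℕ) : (-1:ℤ)^(m % n) = (-1)^m := by
  conv_rhs => rw [← Nat.div_add_mod m n]
  rw [pow_add, pow_mul, hE.neg_one_pow, one_pow, one_mul]

lemma pow_val_succ (hn : 3 ≤ n) (hE : Even n) (a : ZMod n) :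
    (-1:ℤ)^((a+1).val) = -(-1)^(a.val) := by
  haveI : Fact (1 < n) := ⟨by omega⟩
  rw [ZMod.val_add, ZMod.val_one, neg_one_pow_mod_even hE, pow_succ]
  ring

lemma parity_formula (hn : 3 ≤ n) (hE : Even n) (u : (Fin d → ZMod n) → ℤ) (r : Fin d)
    (hflip : ∀ x, u (x + unit r) = - u x)
    (hkeep : ∀ x i, i ≠ r → u (x + unit i) = u x) :
    ∀ x, u x = u 0 * (-1)^((x r).val) := by
  intro x
  have hbase : u (0 : Fin d → ZMod n) = u 0 * (-1)^(((0 : Fin d → ZMod n) r).val) := by simp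
  refine reach_all (P := fun y => u y = u 0 * (-1)^((y r).val)) (fun z i hz => ?_) hbase x
  by_cases hi : i = r
  · subst hi
    have hz1 : (z + unit (n := n) i) i = z i + 1 := by
      simp [Pi.add_apply, unit, iota, sing]
    show u (z + unit i) = u 0 * (-1)^(((z + unit (n := n) i) i).val)
    have hz' : u z = u 0 * (-1)^((z i).val) := hz
    rw [hflip z, hz', hz1, pow_val_succ hn hE]
    ring
  · have hz1 : (z + unit (n := n) i) r = z r := by
      simp only [Pi.add_apply, unit, iota, sing]
      have hri : r ≠ i := fun hc => hi hc.symm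
      simp [hri]
    show u (z + unit i) = u 0 * (-1)^(((z + unit (n := n) i) r).val)
    have hz' : u z = u 0 * (-1)^((z r).val) := hz
    rw [hkeep z i hi, hz', hz1]

lemma neg_one_pow_eq_one_iff (m : ℕ) : ((-1:ℤ)^m = 1 ↔ m % 2 = 0) := by
  rcases Nat.even_or_odd m with he | ho
  · rw [he.neg_one_pow]
    simp [Nat.even_iff.1 he]
  · rw [ho.neg_one_pow]
    rw [Nat.odd_iff.1 ho]
    norm_num

lemma forward_final (hn : 3 ≤ n) (hd : 0 < d) (L : (Fin d → ZMod n) → Letter)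
    (hQ : (∑ v ∈ Vfull n d, R (uL L) v) + 3^(d-1) * R (uL L) 0 = 0) :
    Even n ∧ ∃ r : Fin d, ∃ ε : ℕ, ε < 2 ∧
      ∀ x : Fin d → ZMod n, L x = Letter.A ↔ (x r).val % 2 = ε := by
  have hu := uL_pm L
  have hg := conds_of_eq hn (uL L) hQ
  obtain ⟨r, hr⟩ := global_structure (uL L) hu hg hd
  have hflip : ∀ x, uL L (x + unit r) = - uL L x := fun x => (hr x).1
  have hkeep : ∀ x i, i ≠ r → uL L (x + unit i) = uL L x := fun x i hi => (hr x).2 i hi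
  have hEven := even_of_flip (uL L) hu r hflip
  have hpar := parity_formula hn hEven (uL L) r hflip hkeep
  refine ⟨hEven, r, if uL L 0 = 1 then 0 else 1, by split <;> norm_num, fun x => ?_⟩
  have hAiff : L x = Letter.A ↔ uL L x = 1 := by
    constructor
    · intro h
      rw [uL, if_pos h]
    · intro h
      by_contra hc
      rw [uL, if_neg hc] at h
      norm_num at h
  rw [hAiff, hpar x]
  rcases hu 0 with h0 | h0 <;> rw [h0]
  · rw [if_pos rfl, one_mul]
    exact neg_one_pow_eq_one_iff _
  · rw [if_neg (by norm_num)]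
    constructor
    · intro h
      have h2 : ((-1:ℤ))^((x r).val) = -1 := by linarith
      rcases Nat.even_or_odd ((x r).val) with he | ho
      · rw [he.neg_one_pow] at h2; norm_num at h2
      · exact Nat.odd_iff.1 ho
    · intro h
      have ho : Odd ((x r).val) := Nat.odd_iff.2 h
      rw [ho.neg_one_pow]
      ring

end S9

namespace S9
variable {n d : ℕ} [NeZero n]

def sg (a : ZMod n) : ℤ := if a.val % 2 = 0 then 1 else -1

lemma key_parity (hn : 3 ≤ n) (hE : Even n) (ε : ℕ) (hε : ε < 2) (a b : ZMod n) :
    (if ((a+b).val % 2 = ε) then (1:ℤ) else -1)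
    = sg b * (if (a.val % 2 = ε) then (1:ℤ) else -1) := by
  have hmod : ((a+b).val) % 2 = (a.val + b.val) % 2 := by
    rw [ZMod.val_add, Nat.mod_mod_of_dvd _ hE.two_dvd]
  rw [sg, hmod, Nat.add_mod]
  rcases Nat.mod_two_eq_zero_or_one a.val with hA | hA <;>
    rcases Nat.mod_two_eq_zero_or_one b.val with hB | hB <;>
      rcases (by omega : ε = 0 ∨ ε = 1) with rfl | rfl <;>
        rw [hA, hB] <;> norm_num

lemma R_parity (hn : 3 ≤ n) (hE : Even n) (L : (Fin d → ZMod n) → Letter)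
    (r : Fin d) (ε : ℕ) (hε : ε < 2)
    (hL : ∀ x, L x = Letter.A ↔ (x r).val % 2 = ε) (v : Fin d → ZMod n) :
    R (uL L) v = sg (v r) * (n:ℤ)^d := by
  have hux : ∀ x : Fin d → ZMod n, uL L x = (if ((x r).val % 2 = ε) then (1:ℤ) else -1) := by
    intro x
    rw [uL]
    by_cases h : L x = Letter.A
    · rw [if_pos h, if_pos ((hL x).1 h)]
    · rw [if_neg h, if_neg (fun hc => h ((hL x).2 hc))]
  have hterm : ∀ x : Fin d → ZMod n, uL L x * uL L (x + v) = sg (v r) := by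
    intro x
    rw [hux, hux]
    have hxv : (x + v) r = x r + v r := rfl
    rw [hxv, key_parity hn hE ε hε (x r) (v r)]
    rcases Nat.mod_two_eq_zero_or_one ((v r).val) with hB | hB <;>
      rw [sg, hB] <;> split <;> norm_num
  rw [R, Finset.sum_congr rfl (fun x _ => hterm x), Finset.sum_const, card_univ, card_G,
    nsmul_eq_mul]
  push_cast
  ring

lemma sum_sg (hn : 3 ≤ n) (hE : Even n) (r : Fin d) :
    ∑ v ∈ Vfull n d, sg (v r) = -(3:ℤ)^(d-1) := by
  have hprod : ∀ v ∈ Vfull n d, sg (v r) = ∏ j, (if j = r then sg (v j) else 1) := by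
    intro v _
    rw [Finset.prod_eq_single r (fun j _ hj => if_neg hj) (fun h => absurd (mem_univ r) h),
      if_pos rfl]
  rw [Finset.sum_congr rfl hprod, Vfull,
    ← Finset.prod_univ_sum (fun _ => V3 n) (fun j a => if j = r then sg a else 1)]
  have hcell : ∀ j, (∑ a ∈ V3 n, if j = r then sg a else 1) = if j = r then -1 else 3 := by
    intro j
    by_cases hj : j = r
    · subst hj
      simp only [if_pos rfl]
      rw [V3, Finset.sum_insert (by
          simp only [mem_insert, mem_singleton]
          push_neg
          exact ⟨fun h => zmod_one_ne_zero hn h.symm, fun h => zmod_neg_one_ne_zero hn h.symm⟩),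
        Finset.sum_insert (by simp [zmod_one_ne_neg_one hn]), Finset.sum_singleton]
      have hsg0 : sg (0 : ZMod n) = 1 := by rw [sg]; simp
      have hsg1 : sg (1 : ZMod n) = -1 := by
        haveI : Fact (1 < n) := ⟨by omega⟩
        rw [sg, ZMod.val_one]
        norm_num
      have hsgm : sg (-1 : ZMod n) = -1 := by
        rw [sg, zmod_val_neg_one hn]
        obtain ⟨k, hk⟩ := hE
        rw [if_neg (by omega)]
      rw [hsg0, hsg1, hsgm]
      norm_num
    · simp only [if_neg hj]
      rw [Finset.sum_const, card_V3 hn]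
      norm_num
  rw [Finset.prod_congr rfl (fun j _ => hcell j)]
  rw [← Finset.mul_prod_erase univ _ (mem_univ r), if_pos rfl]
  have herase : ∀ j ∈ univ.erase r, (if j = r then (-1:ℤ) else 3) = 3 := by
    intro j hj
    rw [if_neg (Finset.mem_erase.1 hj).1]
  rw [Finset.prod_congr rfl herase, Finset.prod_const, Finset.card_erase_of_mem (mem_univ r),
    card_univ, Fintype.card_fin]
  ring

lemma reverse_Q (hn : 3 ≤ n) (hE : Even n) (L : (Fin d → ZMod n) → Letter)
    (r : Fin d) (ε : ℕ) (hε : ε < 2)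
    (hL : ∀ x, L x = Letter.A ↔ (x r).val % 2 = ε) :
    ∑ v ∈ Vfull n d, R (uL L) v = -(3:ℤ)^(d-1) * (n:ℤ)^d := by
  rw [Finset.sum_congr rfl (fun v _ => R_parity hn hE L r ε hε hL v), ← Finset.sum_mul,
    sum_sg hn hE r]

end S9


open S9 in
theorem stmt_9 (n d : ℕ) [NeZero n] (hn : 3 ≤ n)
    (L : (Fin d → ZMod n) → Letter) :
    (Finset.univ.filter
        (fun p : (Fin d → ZMod n) × (Fin d → ZMod n) =>
          (∀ j, p.2 j = 0 ∨ p.2 j = 1 ∨ p.2 j = -1) ∧ p.2 ≠ 0 ∧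
          L p.1 = Letter.A ∧
          (L (p.1 + p.2) = Letter.C ∨ L (p.1 + p.2) = Letter.T))).card
      = 3 ^ (d - 1) * n ^ d ↔
    Even n ∧ ∃ r : Fin d, ∃ ε : ℕ, ε < 2 ∧
      ∀ x : Fin d → ZMod n, L x = Letter.A ↔ (x r).val % 2 = ε := by
  rcases Nat.eq_zero_or_pos d with rfl | hd
  · constructor
    · intro h
      exfalso
      have hempty : (Finset.univ.filter
        (fun p : (Fin 0 → ZMod n) × (Fin 0 → ZMod n) =>
          (∀ j, p.2 j = 0 ∨ p.2 j = 1 ∨ p.2 j = -1) ∧ p.2 ≠ 0 ∧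
          L p.1 = Letter.A ∧
          (L (p.1 + p.2) = Letter.C ∨ L (p.1 + p.2) = Letter.T))) = ∅ := by
        rw [Finset.filter_eq_empty_iff]
        intro p _
        intro hc
        exact hc.2.1 (Subsingleton.elim _ _)
      rw [hempty] at h
      simp at h
    · rintro ⟨hE, r, hrest⟩
      exact r.elim0
  · obtain ⟨e, rfl⟩ : ∃ e, d = e + 1 := ⟨d - 1, by omega⟩
    have hci := count_identity (d := e + 1) hn L
    constructor
    · intro h
      apply forward_final hn hd L
      have hcast : ((Finset.univ.filter
          (fun p : (Fin (e+1) → ZMod n) × (Fin (e+1) → ZMod n) =>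
            (∀ j, p.2 j = 0 ∨ p.2 j = 1 ∨ p.2 j = -1) ∧ p.2 ≠ 0 ∧
            L p.1 = Letter.A ∧
            (L (p.1 + p.2) = Letter.C ∨ L (p.1 + p.2) = Letter.T))).card : ℤ)
          = 3^e * (n:ℤ)^(e+1) := by
        rw [h]
        push_cast
        simp [Nat.add_sub_cancel]
      rw [hcast] at hci
      rw [R_zero]
      simp only [Nat.add_sub_cancel] at *
      linear_combination hci
    · rintro ⟨hE, r, ε, hε, hL⟩
      have hQ := reverse_Q hn hE L r ε hε hL
      rw [hQ] at hci
      simp only [Nat.add_sub_cancel] at *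
      have hZ : ((Finset.univ.filter
          (fun p : (Fin (e+1) → ZMod n) × (Fin (e+1) → ZMod n) =>
            (∀ j, p.2 j = 0 ∨ p.2 j = 1 ∨ p.2 j = -1) ∧ p.2 ≠ 0 ∧
            L p.1 = Letter.A ∧
            (L (p.1 + p.2) = Letter.C ∨ L (p.1 + p.2) = Letter.T))).card : ℤ)
          = 3^e * (n:ℤ)^(e+1) := by
        apply mul_left_cancel₀ (a := (4:ℤ)) (by norm_num)
        linear_combination hci
      exact_mod_cast hZ
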